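/- Let (Ω, P) be a probability space, W : Ω → ℝ a nonnegative integrable random variable, Γ ≥ 0 a real number, K ≥ 1 an integer, and q ≥ 4 a real number. Let (B_ψ)_{ψ ∈ ℕ} be a countable family of measurable subsets of Ω that are pairwise disjoint and whose union is Ω. Suppose that for every integer ψ ≥ 1: (i) W(ω) ≤ (ψ + 1) · Γ for almost every ω ∈ B_ψ, and (ii) P(B_ψ) ≤ K · e^{−ψ K q}. Then ∫_{B_0} W dP ≥ E[W] − (2/q) · Γ. -/

import Mathlib

open MeasureTheory

theorem stmt_8 {Ω : Type*} [MeasurableSpace Ω] (P : Measure Ω) [IsProbabilityMeasure P]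
    (W : Ω → ℝ) (hW_nonneg : ∀ ω, 0 ≤ W ω) (hW_int : Integrable W P)
    (Γ : ℝ) (hΓ : 0 ≤ Γ) (K : ℕ) (hK : 1 ≤ K) (q : ℝ) (hq : 4 ≤ q)
    (B : ℕ → Set Ω)
    (hBmeas : ∀ ψ, MeasurableSet (B ψ))
    (hBdisj : Pairwise (Function.onFun Disjoint B))
    (hBcover : (⋃ ψ, B ψ) = Set.univ)
    (hWbound : ∀ ψ : ℕ, 1 ≤ ψ → ∀ᵐ ω ∂P, ω ∈ B ψ → W ω ≤ ((ψ : ℝ) + 1) * Γ)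
    (hBprob : ∀ ψ : ℕ, 1 ≤ ψ →
      P (B ψ) ≤ ENNReal.ofReal ((K : ℝ) * Real.exp (-((ψ : ℝ) * K * q)))) :
    (∫ ω, W ω ∂P) - (2 / q) * Γ ≤ ∫ ω in B 0, W ω ∂P := by
  have hK1 : (1:ℝ) ≤ K := by exact_mod_cast hK
  set t : ℝ := (K:ℝ) * q with ht_def
  have hq_pos : (0:ℝ) < q := by linarith
  have ht4 : 4 ≤ t := by nlinarith
  have ht_pos : 0 < t := by linarith
  set r : ℝ := 2 * Real.exp (-t) with hr_def
  have hr_pos : 0 < r := by positivity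
  have hexp_t : t + 2 ≤ Real.exp t := by
    have h := Real.add_one_le_exp (t/2)
    have h2 : Real.exp (t/2) * Real.exp (t/2) = Real.exp t := by
      rw [← Real.exp_add]; ring_nf
    nlinarith [Real.exp_pos (t/2)]
  have hid : Real.exp (-t) * Real.exp t = 1 := by rw [← Real.exp_add]; simp
  have hr_lt : r < 1 := by
    have he := Real.exp_pos (-t)
    nlinarith [mul_le_mul_of_nonneg_left hexp_t he.le]
  -- the union of the B (n+1) is the complement of B 0
  have hS : (⋃ n, B (n+1)) = (B 0)ᶜ := by
    ext x
    simp only [Set.mem_iUnion, Set.mem_compl_iff]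
    constructor
    · rintro ⟨n, hn⟩ hx0
      exact Set.disjoint_left.mp (hBdisj (show (n+1 : ℕ) ≠ 0 by omega)) hn hx0
    · intro hx0
      have hx : x ∈ ⋃ ψ, B ψ := hBcover ▸ Set.mem_univ x
      obtain ⟨ψ, hψ⟩ := Set.mem_iUnion.mp hx
      match ψ, hψ with
      | 0, h => exact absurd h hx0
      | n+1, h => exact ⟨n, h⟩
  have hsplit : ∫ ω, W ω ∂P = (∫ ω in B 0, W ω ∂P) + ∫ ω in (B 0)ᶜ, W ω ∂P :=
    (integral_add_compl (hBmeas 0) hW_int).symm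
  -- decompose the integral over the complement as a sum
  have hmeas' : ∀ n : ℕ, MeasurableSet (B (n+1)) := fun n => hBmeas (n+1)
  have hdisj' : Pairwise (Function.onFun Disjoint (fun n : ℕ => B (n+1))) :=
    fun i j hij => hBdisj (show (i+1 : ℕ) ≠ j+1 by omega)
  have hint : IntegrableOn W (⋃ n, B (n+1)) P := hW_int.integrableOn
  have hHasSum := hasSum_integral_iUnion hmeas' hdisj' hint
  rw [hS] at hHasSum
  -- termwise bound
  have hterm : ∀ n : ℕ, ∫ ω in B (n+1), W ω ∂P ≤ (Γ * K) * r ^ (n+1) := by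
    intro n
    have hb := (ae_restrict_iff' (hBmeas (n+1))).mpr (hWbound (n+1) (by omega))
    have h1 : ∫ ω in B (n+1), W ω ∂P
        ≤ (P (B (n+1))).toReal * ((((n+1:ℕ) : ℝ) + 1) * Γ) := by
      calc ∫ ω in B (n+1), W ω ∂P
          ≤ ∫ _ω in B (n+1), (((n+1:ℕ) : ℝ) + 1) * Γ ∂P :=
            integral_mono_ae hW_int.integrableOn (integrable_const _) hb
        _ = (P (B (n+1))).toReal * ((((n+1:ℕ) : ℝ) + 1) * Γ) := by
            rw [setIntegral_const]; simp [smul_eq_mul, Measure.real]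
    have h2 : (P (B (n+1))).toReal ≤ (K : ℝ) * Real.exp (-(((n:ℝ)+1) * t)) := by
      have hp := hBprob (n+1) (by omega)
      have h3 := ENNReal.toReal_le_of_le_ofReal (by positivity) hp
      have hE : (((n+1:ℕ)) : ℝ) * K * q = ((n:ℝ)+1) * t := by push_cast [ht_def]; ring
      rwa [hE] at h3
    have hrpow : r ^ (n+1) = 2^(n+1) * Real.exp (-(((n:ℝ)+1) * t)) := by
      rw [hr_def, mul_pow, ← Real.exp_nat_mul]
      congr 1
      push_cast; ring
    have hn2 : ((n:ℝ) + 2) ≤ 2^(n+1) := by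
      have := @Nat.lt_two_pow_self (n+1)
      have h4 : (n:ℝ) + 1 + 1 ≤ 2^(n+1) := by exact_mod_cast this
      linarith
    have hexp_nn : (0:ℝ) ≤ Real.exp (-(((n:ℝ)+1) * t)) := (Real.exp_pos _).le
    calc ∫ ω in B (n+1), W ω ∂P
        ≤ (P (B (n+1))).toReal * ((((n+1:ℕ) : ℝ) + 1) * Γ) := h1
      _ ≤ ((K : ℝ) * Real.exp (-(((n:ℝ)+1) * t))) * ((((n+1:ℕ) : ℝ) + 1) * Γ) := by
          apply mul_le_mul_of_nonneg_right h2
          positivity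
      _ = ((n:ℝ) + 2) * (Γ * K * Real.exp (-(((n:ℝ)+1) * t))) := by push_cast; ring
      _ ≤ (2^(n+1) : ℝ) * (Γ * K * Real.exp (-(((n:ℝ)+1) * t))) := by
          apply mul_le_mul_of_nonneg_right hn2
          positivity
      _ = (Γ * K) * r ^ (n+1) := by rw [hrpow]; ring
  -- summability of geometric bound
  have hgeo : Summable (fun n : ℕ => (Γ * K) * r ^ (n+1)) := by
    simp_rw [pow_succ', ← mul_assoc]
    exact (summable_geometric_of_lt_one hr_pos.le hr_lt).mul_left _
  have hsum_le : ∫ ω in (B 0)ᶜ, W ω ∂P ≤ ∑' n : ℕ, (Γ * K) * r ^ (n+1) := by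
    rw [← hHasSum.tsum_eq]
    exact Summable.tsum_le_tsum hterm hHasSum.summable hgeo
  have htsum : ∑' n : ℕ, (Γ * K) * r ^ (n+1) = ((Γ * K) * r) * (1 - r)⁻¹ := by
    simp_rw [pow_succ', ← mul_assoc]
    rw [tsum_mul_left, tsum_geometric_of_lt_one hr_pos.le hr_lt]
  have h1r : 0 < 1 - r := by linarith
  have hfinal : ((Γ * K) * r) * (1 - r)⁻¹ ≤ 2 / q * Γ := by
    have hrr : r * (1 - r)⁻¹ ≤ 2 / t := by
      rw [← div_eq_mul_inv, div_le_div_iff₀ h1r ht_pos]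
      have he := Real.exp_pos (-t)
      nlinarith [mul_le_mul_of_nonneg_left hexp_t he.le]
    have hK0 : (0:ℝ) < K := by linarith
    calc ((Γ * K) * r) * (1 - r)⁻¹ = (Γ * K) * (r * (1 - r)⁻¹) := by ring
      _ ≤ (Γ * K) * (2 / t) := by
          apply mul_le_mul_of_nonneg_left hrr (by positivity)
      _ = 2 / q * Γ := by rw [ht_def]; field_simp
  linarith [hsplit, hsum_le, htsum.le, htsum.ge, hfinal]
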